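/- For a proper subdomain G of ℝⁿ and all x, y ∈ G, (1/√2)·p_G(x,y) ≤ s_G(x,y) ≤ 2·p_G(x,y). -/

import Mathlib

open Metric Set

noncomputable def dd {n : ℕ} (G : Set (EuclideanSpace ℝ (Fin n))) (x : EuclideanSpace ℝ (Fin n)) : ℝ :=
  Metric.infDist x (frontier G)

noncomputable def jMet {n : ℕ} (G : Set (EuclideanSpace ℝ (Fin n))) (x y : EuclideanSpace ℝ (Fin n)) : ℝ :=
  Real.log (1 + dist x y / min (dd G x) (dd G y))

noncomputable def jStar {n : ℕ} (G : Set (EuclideanSpace ℝ (Fin n))) (x y : EuclideanSpace ℝ (Fin n)) : ℝ :=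
  Real.tanh (jMet G x y / 2)

noncomputable def sMet {n : ℕ} (G : Set (EuclideanSpace ℝ (Fin n))) (x y : EuclideanSpace ℝ (Fin n)) : ℝ :=
  ⨆ z : frontier G, dist x y / (dist x (z : EuclideanSpace ℝ (Fin n)) + dist (z : EuclideanSpace ℝ (Fin n)) y)

noncomputable def pMet {n : ℕ} (G : Set (EuclideanSpace ℝ (Fin n))) (x y : EuclideanSpace ℝ (Fin n)) : ℝ :=
  dist x y / Real.sqrt (dist x y ^ 2 + 4 * dd G x * dd G y)

noncomputable def vMet {n : ℕ} (G : Set (EuclideanSpace ℝ (Fin n))) (x y : EuclideanSpace ℝ (Fin n)) : ℝ :=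
  ⨆ z : frontier G, EuclideanGeometry.angle x (z : EuclideanSpace ℝ (Fin n)) y

lemma dd_pos {n : ℕ} {G : Set (EuclideanSpace ℝ (Fin n))} (hGo : IsOpen G)
    (hF : (frontier G).Nonempty) {x : EuclideanSpace ℝ (Fin n)} (hx : x ∈ G) : 0 < dd G x := by
  refine (isClosed_frontier.notMem_iff_infDist_pos hF).mp ?_
  simp [frontier, hGo.interior_eq]
  intro _; exact hx

lemma bddA {n : ℕ} {G : Set (EuclideanSpace ℝ (Fin n))} (hGo : IsOpen G)
    (hF : (frontier G).Nonempty) {x y : EuclideanSpace ℝ (Fin n)} (hx : x ∈ G) (hy : y ∈ G) :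
    BddAbove (Set.range fun z : frontier G =>
      dist x y / (dist x (z : EuclideanSpace ℝ (Fin n)) + dist (z : EuclideanSpace ℝ (Fin n)) y)) := by
  refine ⟨1, ?_⟩
  rintro _ ⟨z, rfl⟩
  have h1 : dd G x ≤ dist x (z : EuclideanSpace ℝ (Fin n)) := infDist_le_dist_of_mem z.2
  have h2 : 0 < dd G x := dd_pos hGo hF hx
  have h3 : dist x y ≤ dist x (z : EuclideanSpace ℝ (Fin n)) + dist (z : EuclideanSpace ℝ (Fin n)) y :=
    dist_triangle _ _ _
  have h4 : 0 ≤ dist (z : EuclideanSpace ℝ (Fin n)) y := dist_nonneg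
  rw [div_le_one (by linarith)]
  exact h3

lemma lower_aux {n : ℕ} {G : Set (EuclideanSpace ℝ (Fin n))} (hGo : IsOpen G)
    (hF : (frontier G).Nonempty) {x y : EuclideanSpace ℝ (Fin n)} (hx : x ∈ G) (hy : y ∈ G)
    (hle : dd G x ≤ dd G y) :
    (1 / Real.sqrt 2) * pMet G x y ≤ sMet G x y := by
  haveI : Nonempty (frontier G) := hF.to_subtype
  set r := dist x y with hr
  have hdx : 0 < dd G x := dd_pos hGo hF hx
  have hdy : 0 < dd G y := dd_pos hGo hF hy
  have hr0 : 0 ≤ r := dist_nonneg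
  obtain ⟨z, hzF, hz⟩ := isClosed_frontier.exists_infDist_eq_dist hF x
  have hz' : dist x z = dd G x := hz.symm
  have hzy : dist z y ≤ dd G x + r := by
    calc dist z y ≤ dist z x + dist x y := dist_triangle _ _ _
    _ = dd G x + r := by rw [dist_comm z x, hz']
  set S := Real.sqrt (r ^ 2 + 4 * dd G x * dd G y) with hS
  have hSarg : (0:ℝ) < r ^ 2 + 4 * dd G x * dd G y := by positivity
  have hSpos : 0 < S := Real.sqrt_pos.mpr hSarg
  have hSsq : S ^ 2 = r ^ 2 + 4 * dd G x * dd G y := Real.sq_sqrt hSarg.le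
  have h2 : (Real.sqrt 2) ^ 2 = 2 := Real.sq_sqrt (by norm_num)
  have h2p : 0 < Real.sqrt 2 := Real.sqrt_pos.mpr (by norm_num)
  have key : r + 2 * dd G x ≤ Real.sqrt 2 * S := by
    nlinarith [sq_nonneg (r - 2 * dd G x), sq_nonneg (Real.sqrt 2 * S - (r + 2 * dd G x)),
      sq_nonneg (Real.sqrt 2 * S + (r + 2 * dd G x)), mul_pos h2p hSpos]
  have step1 : (1 / Real.sqrt 2) * pMet G x y ≤ r / (r + 2 * dd G x) := by
    have : (1 / Real.sqrt 2) * pMet G x y = r / (Real.sqrt 2 * S) := by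
      rw [pMet]; field_simp; rw [hS, ← hr]; ring
    rw [this]
    gcongr
  have step2 : r / (r + 2 * dd G x) ≤ r / (dist x z + dist z y) := by
    have hpos : 0 < dist x z + dist z y := by
      have : 0 ≤ dist z y := dist_nonneg
      rw [hz']; linarith
    rw [div_le_div_iff₀ (by linarith) hpos]
    have h5 : dist x z + dist z y ≤ r + 2 * dd G x := by rw [hz']; linarith
    nlinarith
  have step3 : r / (dist x z + dist z y) ≤ sMet G x y :=
    le_ciSup (bddA hGo hF hx hy) ⟨z, hzF⟩
  linarith

example : True := trivial

lemma pMet_symm {n : ℕ} (G : Set (EuclideanSpace ℝ (Fin n))) (x y : EuclideanSpace ℝ (Fin n)) :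
    pMet G x y = pMet G y x := by
  unfold pMet
  rw [dist_comm x y]
  ring_nf

lemma upper_aux {n : ℕ} {G : Set (EuclideanSpace ℝ (Fin n))} (hGo : IsOpen G)
    (hF : (frontier G).Nonempty) {x y : EuclideanSpace ℝ (Fin n)} (hx : x ∈ G) (hy : y ∈ G) :
    sMet G x y ≤ 2 * pMet G x y := by
  haveI : Nonempty (frontier G) := hF.to_subtype
  set r := dist x y with hr
  have hdx : 0 < dd G x := dd_pos hGo hF hx
  have hdy : 0 < dd G y := dd_pos hGo hF hy
  have hr0 : 0 ≤ r := dist_nonneg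
  set S := Real.sqrt (r ^ 2 + 4 * dd G x * dd G y) with hS
  have hSarg : (0:ℝ) < r ^ 2 + 4 * dd G x * dd G y := by positivity
  have hSpos : 0 < S := Real.sqrt_pos.mpr hSarg
  have hSsq : S ^ 2 = r ^ 2 + 4 * dd G x * dd G y := Real.sq_sqrt hSarg.le
  refine ciSup_le fun z => ?_
  have ha : dd G x ≤ dist x (z : EuclideanSpace ℝ (Fin n)) := infDist_le_dist_of_mem z.2
  have hb : dd G y ≤ dist (z : EuclideanSpace ℝ (Fin n)) y := by
    rw [dist_comm]; exact infDist_le_dist_of_mem z.2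
  have htri : r ≤ dist x (z : EuclideanSpace ℝ (Fin n)) + dist (z : EuclideanSpace ℝ (Fin n)) y :=
    dist_triangle _ _ _
  set a := dist x (z : EuclideanSpace ℝ (Fin n))
  set b := dist (z : EuclideanSpace ℝ (Fin n)) y
  have hab : 0 < a + b := by linarith
  have hkey : S ≤ 2 * (a + b) := by
    nlinarith [sq_nonneg (a + b - S), sq_nonneg (a - b), sq_nonneg (dd G x - dd G y),
      sq_nonneg (a + b - dd G x - dd G y)]
  have : 2 * pMet G x y = 2 * r / S := by rw [pMet]; ring
  rw [this, div_le_div_iff₀ hab hSpos]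
  nlinarith

lemma frontier_ne {n : ℕ} (G : Set (EuclideanSpace ℝ (Fin n))) (hGc : IsConnected G) (hGne : G ≠ univ) :
    (frontier G).Nonempty := by
  rw [Set.nonempty_iff_ne_empty]
  intro h
  rcases isClopen_iff.mp (isClopen_iff_frontier_eq_empty.mpr h) with h1 | h1
  · exact hGc.nonempty.ne_empty h1
  · exact hGne h1

lemma sMet_symm {n : ℕ} (G : Set (EuclideanSpace ℝ (Fin n))) (x y : EuclideanSpace ℝ (Fin n)) :
    sMet G x y = sMet G y x := by
  unfold sMet
  congr 1
  funext z
  rw [dist_comm x y, dist_comm x (z : EuclideanSpace ℝ (Fin n)), dist_comm (z : EuclideanSpace ℝ (Fin n)) y, add_comm]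

theorem stmt5 {n : ℕ} (G : Set (EuclideanSpace ℝ (Fin n)))
    (hGo : IsOpen G) (hGc : IsConnected G) (hGne : G ≠ univ)
    (x y : EuclideanSpace ℝ (Fin n)) (hx : x ∈ G) (hy : y ∈ G) :
    (1 / Real.sqrt 2) * pMet G x y ≤ sMet G x y ∧ sMet G x y ≤ 2 * pMet G x y := by

  have hF := frontier_ne G hGc hGne
  refine ⟨?_, upper_aux hGo hF hx hy⟩
  rcases le_total (dd G x) (dd G y) with h | h
  · exact lower_aux hGo hF hx hy h
  · rw [sMet_symm, pMet_symm]
    exact lower_aux hGo hF hy hx h
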